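/- There is a universal constant C > 0 such that the following holds. Let X ~ Bin(p_1,…,p_n) with d = Σ p_i > 0 and p_max = max_i p_i ≥ d/n. Then for every integer k with 2d ≤ k ≤ (d/p_max)^{2/5}/C, P(X > k) ≤ C (d/k + p_max k^{5/2}/d) · P(X = k). -/

import Mathlib

open Finset Real

/-- The probability that the sum of independent Bernoulli(`p l`) variables over
indices `l ∈ s` equals `t` (zero for `t < 0`). -/
noncomputable def binProbOn {ι : Type*} [DecidableEq ι] (s : Finset ι) (p : ι → ℝ) (t : ℤ) : ℝ :=
  ∑ S ∈ s.powerset.filter (fun S => (S.card : ℤ) = t), (∏ l ∈ S, p l) * ∏ l ∈ s \ S, (1 - p l)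

noncomputable def binW {ι : Type*} [DecidableEq ι] (s : Finset ι) (p : ι → ℝ) (t : ℕ) : ℝ :=
  ∑ S ∈ Finset.powersetCard t s, (∏ l ∈ S, p l) * ∏ l ∈ s \ S, (1 - p l)

lemma binProbOn_eq_binW {ι : Type*} [DecidableEq ι] (s : Finset ι) (p : ι → ℝ) (t : ℕ) :
    binProbOn s p (t : ℤ) = binW s p t := by
  unfold binProbOn binW
  rw [Finset.powersetCard_eq_filter]
  apply Finset.sum_congr _ (fun _ _ => rfl)
  apply Finset.filter_congr
  intro S _
  exact_mod_cast Iff.rfl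

lemma binW_nonneg {ι : Type*} [DecidableEq ι] (s : Finset ι) (p : ι → ℝ)
    (hp : ∀ l, 0 ≤ p l ∧ p l ≤ 1) (t : ℕ) : 0 ≤ binW s p t := by
  apply Finset.sum_nonneg
  intro S _
  apply mul_nonneg
  · exact Finset.prod_nonneg fun l _ => (hp l).1
  · exact Finset.prod_nonneg fun l _ => by linarith [(hp l).2]

lemma binW_eq_zero {ι : Type*} [DecidableEq ι] (s : Finset ι) (p : ι → ℝ) {t : ℕ}
    (h : s.card < t) : binW s p t = 0 := by
  unfold binW
  rw [Finset.powersetCard_eq_empty.2 h, Finset.sum_empty]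

lemma binW_insert {ι : Type*} [DecidableEq ι] {a : ι} {s : Finset ι} (ha : a ∉ s)
    (p : ι → ℝ) (t : ℕ) :
    binW (insert a s) p (t + 1) = p a * binW s p t + (1 - p a) * binW s p (t + 1) := by
  have hdisj : Disjoint (Finset.powersetCard (t + 1) s)
      ((Finset.powersetCard t s).image (insert a)) := by
    rw [Finset.disjoint_left]
    intro S hS hS'
    rw [Finset.mem_powersetCard] at hS
    rw [Finset.mem_image] at hS'
    obtain ⟨S', _, rfl⟩ := hS'
    exact ha (hS.1 (Finset.mem_insert_self a S'))
  have h1 : ∑ S ∈ Finset.powersetCard (t + 1) s,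
      (∏ l ∈ S, p l) * ∏ l ∈ insert a s \ S, (1 - p l) = (1 - p a) * binW s p (t + 1) := by
    rw [binW, Finset.mul_sum]
    apply Finset.sum_congr rfl
    intro S hS
    rw [Finset.mem_powersetCard] at hS
    have haS : a ∉ S := fun h => ha (hS.1 h)
    rw [Finset.insert_sdiff_of_notMem _ haS,
      Finset.prod_insert (fun h => ha (Finset.mem_sdiff.1 h).1)]
    ring
  have h2 : ∑ S ∈ (Finset.powersetCard t s).image (insert a),
      (∏ l ∈ S, p l) * ∏ l ∈ insert a s \ S, (1 - p l) = p a * binW s p t := by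
    rw [Finset.sum_image]
    · rw [binW, Finset.mul_sum]
      apply Finset.sum_congr rfl
      intro S hS
      rw [Finset.mem_powersetCard] at hS
      have haS : a ∉ S := fun h => ha (hS.1 h)
      rw [Finset.prod_insert haS, Finset.insert_sdiff_insert,
        Finset.sdiff_insert, Finset.erase_eq_of_notMem (fun h => ha (Finset.mem_sdiff.1 h).1)]
      ring
    · intro S1 hS1 S2 hS2 h
      rw [Finset.mem_coe, Finset.mem_powersetCard] at hS1 hS2
      have key : ∀ S : Finset ι, S ⊆ s → (insert a S).erase a = S := fun S hSs =>
        Finset.erase_insert (fun h => ha (hSs h))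
      rw [← key S1 hS1.1, ← key S2 hS2.1, h]
  rw [binW, Finset.powersetCard_succ_insert ha, Finset.sum_union hdisj, h1, h2, add_comm]

lemma binW_insert_zero {ι : Type*} [DecidableEq ι] {a : ι} {s : Finset ι} (ha : a ∉ s)
    (p : ι → ℝ) : binW (insert a s) p 0 = (1 - p a) * binW s p 0 := by
  unfold binW
  simp only [Finset.powersetCard_zero, Finset.sum_singleton, Finset.sdiff_empty,
    Finset.prod_empty, Finset.prod_insert ha]
  ring

lemma binW_ratio {ι : Type*} [DecidableEq ι] (p : ι → ℝ) (pm : ℝ) (hpm : pm < 1)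
    (hp : ∀ l, 0 ≤ p l ∧ p l ≤ pm) (s : Finset ι) (t : ℕ) :
    ((t : ℝ) + 1) * ((1 - pm) * binW s p (t + 1)) ≤ (∑ l ∈ s, p l) * binW s p t := by
  have hp1 : ∀ l, 0 ≤ p l ∧ p l ≤ 1 := fun l => ⟨(hp l).1, ((hp l).2.trans hpm.le)⟩
  induction s using Finset.induction_on generalizing t with
  | empty =>
    rw [binW_eq_zero _ _ (by simp), Finset.sum_empty]
    simp
  | @insert a s ha ih =>
    have hpa0 := (hp a).1
    have hpa1 : p a ≤ pm := (hp a).2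
    have hS : 0 ≤ ∑ l ∈ s, p l := Finset.sum_nonneg fun l _ => (hp l).1
    cases t with
    | zero =>
      rw [binW_insert ha p 0, binW_insert_zero ha, Finset.sum_insert ha]
      have ih0 := ih 0
      have hW0 : 0 ≤ binW s p 0 := binW_nonneg s p hp1 0
      have hW1 : 0 ≤ binW s p 1 := binW_nonneg s p hp1 1
      push_cast at ih0 ⊢
      nlinarith [mul_le_mul_of_nonneg_left ih0 (by linarith : (0:ℝ) ≤ 1 - p a),
        mul_nonneg (mul_nonneg hpa0 hW0) (by linarith : (0:ℝ) ≤ pm - p a)]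
    | succ m =>
      rw [binW_insert ha p (m + 1), binW_insert ha p m, Finset.sum_insert ha]
      have ihm := ih m
      have ihm1 := ih (m + 1)
      have hWm : 0 ≤ binW s p m := binW_nonneg s p hp1 m
      have hWm1 : 0 ≤ binW s p (m + 1) := binW_nonneg s p hp1 (m + 1)
      have hWm2 : 0 ≤ binW s p (m + 1 + 1) := binW_nonneg s p hp1 (m + 1 + 1)
      push_cast at ihm ihm1 ⊢
      nlinarith [mul_le_mul_of_nonneg_left ihm hpa0,
        mul_le_mul_of_nonneg_left ihm1 (by linarith : (0:ℝ) ≤ 1 - p a),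
        mul_nonneg (mul_nonneg hpa0 hWm1) (by linarith : (0:ℝ) ≤ pm - p a),
        mul_nonneg (mul_nonneg hpa0 hpa0) hWm]

lemma binW_geom {ι : Type*} [DecidableEq ι] (p : ι → ℝ) (pm : ℝ) (hpm : pm < 1)
    (hp : ∀ l, 0 ≤ p l ∧ p l ≤ pm) (s : Finset ι) (k : ℕ) (j : ℕ) :
    (((k : ℝ) + 1) * (1 - pm)) ^ (j + 1) * binW s p (k + 1 + j) ≤
      (∑ l ∈ s, p l) ^ (j + 1) * binW s p k := by
  have hp1 : ∀ l, 0 ≤ p l ∧ p l ≤ 1 := fun l => ⟨(hp l).1, ((hp l).2.trans hpm.le)⟩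
  have hS : 0 ≤ ∑ l ∈ s, p l := Finset.sum_nonneg fun l _ => (hp l).1
  have hc0 : (0:ℝ) ≤ ((k : ℝ) + 1) * (1 - pm) := by
    have : (0:ℝ) ≤ (k:ℝ) := Nat.cast_nonneg k
    nlinarith
  induction j with
  | zero =>
    have h := binW_ratio p pm hpm hp s k
    simpa [mul_assoc] using h
  | succ j ih =>
    have h := binW_ratio p pm hpm hp s (k + 1 + j)
    have hW : 0 ≤ binW s p (k + 1 + j + 1) := binW_nonneg s p hp1 _
    have key : (((k:ℝ) + 1) * (1 - pm)) * binW s p (k + 1 + j + 1) ≤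
        (∑ l ∈ s, p l) * binW s p (k + 1 + j) := by
      refine le_trans ?_ h
      push_cast
      nlinarith [mul_nonneg (by linarith [hpm] : (0:ℝ) ≤ 1 - pm) hW,
        (by positivity : (0:ℝ) ≤ (j:ℝ))]
    have e : k + 1 + (j + 1) = k + 1 + j + 1 := rfl
    rw [e]
    calc (((k:ℝ) + 1) * (1 - pm)) ^ (j + 1 + 1) * binW s p (k + 1 + j + 1)
        = (((k:ℝ) + 1) * (1 - pm)) ^ (j + 1) *
            ((((k:ℝ) + 1) * (1 - pm)) * binW s p (k + 1 + j + 1)) := by ring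
      _ ≤ (((k:ℝ) + 1) * (1 - pm)) ^ (j + 1) *
            ((∑ l ∈ s, p l) * binW s p (k + 1 + j)) :=
          mul_le_mul_of_nonneg_left key (pow_nonneg hc0 _)
      _ = (∑ l ∈ s, p l) * ((((k:ℝ) + 1) * (1 - pm)) ^ (j + 1) * binW s p (k + 1 + j)) := by ring
      _ ≤ (∑ l ∈ s, p l) * ((∑ l ∈ s, p l) ^ (j + 1) * binW s p k) :=
          mul_le_mul_of_nonneg_left ih hS
      _ = (∑ l ∈ s, p l) ^ (j + 1 + 1) * binW s p k := by ring

theorem stmt_17 : ∃ C : ℝ, 0 < C ∧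
    ∀ (n : ℕ) (p : Fin n → ℝ), (∀ l, 0 ≤ p l ∧ p l ≤ 1) →
    ∀ d pmax : ℝ, d = ∑ l, p l → 0 < d →
    (∀ l, p l ≤ pmax) → (∃ l, p l = pmax) → d / n ≤ pmax →
    ∀ k : ℕ, 2 * d ≤ k → (k : ℝ) ≤ (d / pmax) ^ ((2 : ℝ) / 5) / C →
    (∑' t : ℤ, if (k : ℤ) < t then binProbOn Finset.univ p t else 0) ≤
      C * (d / k + pmax * (k : ℝ) ^ ((5 : ℝ) / 2) / d) * binProbOn Finset.univ p (k : ℤ) := by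
  refine ⟨4, by norm_num, ?_⟩
  intro n p hp d pmax hd hd0 hpmax hex hpn k hk2 hkC
  have hn : 0 < n := by
    rcases Nat.eq_zero_or_pos n with h | h
    · exfalso; subst h; rw [hd] at hd0; simp at hd0
    · exact h
  have hpm0 : 0 < pmax :=
    lt_of_lt_of_le (div_pos hd0 (by exact_mod_cast hn)) hpn
  have hpmd : pmax ≤ d := by
    obtain ⟨l0, hl0⟩ := hex
    rw [hd, ← hl0]
    exact Finset.single_le_sum (fun l _ => (hp l).1) (Finset.mem_univ l0)
  have hk0 : 0 < k := by
    have : (0:ℝ) < (k:ℝ) := by linarith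
    exact_mod_cast this
  have hk1 : (1:ℝ) ≤ (k:ℝ) := by exact_mod_cast hk0
  -- pmax ≤ 1/8
  have h8d : 8 * d ≤ (d / pmax) ^ ((2:ℝ)/5) := by
    rw [le_div_iff₀ (by norm_num : (0:ℝ) < 4)] at hkC
    linarith
  have hdp0 : (0:ℝ) ≤ d / pmax := (div_pos hd0 hpm0).le
  have h52 : (8*d) ^ ((5:ℝ)/2) ≤ d / pmax := by
    have h := Real.rpow_le_rpow (by linarith : (0:ℝ) ≤ 8*d) h8d (by norm_num : (0:ℝ) ≤ 5/2)
    rwa [← Real.rpow_mul hdp0, show (2:ℝ)/5 * (5/2) = 1 by norm_num, Real.rpow_one] at h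
  have hpm8 : pmax ≤ 1/8 := by
    by_contra hcon
    push_neg at hcon
    have e1 : ((1:ℝ)/8) ^ ((5:ℝ)/2) < pmax ^ ((5:ℝ)/2) :=
      Real.rpow_lt_rpow (by norm_num) hcon (by norm_num)
    have e2 : pmax ^ ((5:ℝ)/2) = pmax ^ ((3:ℝ)/2) * pmax := by
      rw [show (5:ℝ)/2 = 3/2 + 1 by norm_num, Real.rpow_add hpm0, Real.rpow_one]
    have hA0 : (0:ℝ) < (8*d) ^ ((5:ℝ)/2) := Real.rpow_pos_of_pos (by linarith) _
    have e3 : pmax ≤ d / (8*d) ^ ((5:ℝ)/2) := by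
      rw [le_div_iff₀ hA0]
      have := (le_div_iff₀ hpm0).1 h52
      linarith
    have e4 : pmax ^ ((3:ℝ)/2) ≤ d ^ ((3:ℝ)/2) :=
      Real.rpow_le_rpow hpm0.le hpmd (by norm_num)
    have e5 : (8*d) ^ ((5:ℝ)/2) = 8 ^ ((5:ℝ)/2) * d ^ ((5:ℝ)/2) :=
      Real.mul_rpow (by norm_num) hd0.le
    have e6 : d ^ ((3:ℝ)/2) * d = d ^ ((5:ℝ)/2) := by
      rw [show (5:ℝ)/2 = 3/2 + 1 by norm_num, Real.rpow_add hd0, Real.rpow_one]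
    have hd52 : (0:ℝ) < d ^ ((5:ℝ)/2) := Real.rpow_pos_of_pos hd0 _
    have h852 : (0:ℝ) < (8:ℝ) ^ ((5:ℝ)/2) := Real.rpow_pos_of_pos (by norm_num) _
    have e7 : ((1:ℝ)/8) ^ ((5:ℝ)/2) = ((8:ℝ) ^ ((5:ℝ)/2))⁻¹ := by
      rw [one_div, ← Real.inv_rpow (by norm_num : (0:ℝ) ≤ 8)]
    have e8 : pmax ^ ((5:ℝ)/2) ≤ ((8:ℝ) ^ ((5:ℝ)/2))⁻¹ := by
      rw [e2]
      calc pmax ^ ((3:ℝ)/2) * pmax ≤ d ^ ((3:ℝ)/2) * (d / (8*d) ^ ((5:ℝ)/2)) :=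
            mul_le_mul e4 e3 hpm0.le (Real.rpow_nonneg hd0.le _)
        _ = ((8:ℝ) ^ ((5:ℝ)/2))⁻¹ := by
            rw [e5, ← mul_div_assoc, e6]
            field_simp
    rw [e7] at e1
    linarith
  -- setup
  have hpuniv : ∀ l, 0 ≤ p l ∧ p l ≤ pmax := fun l => ⟨(hp l).1, hpmax l⟩
  have hpm1 : pmax < 1 := by linarith
  have hdsum : ∑ l ∈ Finset.univ, p l = d := hd.symm
  have hWk0 : 0 ≤ binW Finset.univ p k := binW_nonneg _ _ hp _
  have hc0 : (0:ℝ) < ((k:ℝ) + 1) * (1 - pmax) := by nlinarith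
  have hq0 : (0:ℝ) ≤ d / (((k:ℝ) + 1) * (1 - pmax)) := (div_pos hd0 hc0).le
  have hq47 : d / (((k:ℝ) + 1) * (1 - pmax)) ≤ 4/7 := by
    rw [div_le_iff₀ hc0]
    nlinarith [mul_nonneg (by positivity : (0:ℝ) ≤ (k:ℝ)+1)
      (by linarith : (0:ℝ) ≤ 1/8 - pmax)]
  have hq1 : d / (((k:ℝ) + 1) * (1 - pmax)) < 1 := lt_of_le_of_lt hq47 (by norm_num)
  set q : ℝ := d / (((k:ℝ) + 1) * (1 - pmax)) with hqdef
  -- per-term bound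
  have hterm : ∀ j : ℕ, binW (Finset.univ : Finset (Fin n)) p (k+1+j) ≤
      q^(j+1) * binW Finset.univ p k := by
    intro j
    have h := binW_geom p pmax hpm1 hpuniv Finset.univ k j
    rw [hdsum] at h
    have hcpow : (0:ℝ) < (((k:ℝ) + 1) * (1 - pmax))^(j+1) := pow_pos hc0 _
    have hq : q^(j+1) = d^(j+1) / (((k:ℝ) + 1) * (1 - pmax))^(j+1) := by
      rw [hqdef, div_pow]
    rw [hq, div_mul_eq_mul_div, le_div_iff₀ hcpow]
    calc binW Finset.univ p (k+1+j) * (((k:ℝ) + 1) * (1 - pmax))^(j+1)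
        = (((k:ℝ) + 1) * (1 - pmax))^(j+1) * binW Finset.univ p (k+1+j) := by ring
      _ ≤ d^(j+1) * binW Finset.univ p k := h
  -- tsum to finite sum
  have hzero : ∀ t : ℤ, (k:ℤ) < t → (n:ℤ) < t →
      binProbOn (Finset.univ : Finset (Fin n)) p t = 0 := by
    intro t h1 h2
    have ht0 : 0 ≤ t := by omega
    lift t to ℕ using ht0
    rw [binProbOn_eq_binW, binW_eq_zero]
    rw [Finset.card_univ, Fintype.card_fin]
    exact_mod_cast h2
  have hsupp : ∀ t ∉ (Finset.range n).image (fun j : ℕ => (k:ℤ)+1+j),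
      (if (k : ℤ) < t then binProbOn (Finset.univ : Finset (Fin n)) p t else 0) = 0 := by
    intro t ht
    by_cases h : (k:ℤ) < t
    · rw [if_pos h]
      by_cases h2 : (n:ℤ) < t
      · exact hzero t h h2
      · exfalso
        apply ht
        push_neg at h2
        rw [Finset.mem_image]
        exact ⟨(t - ((k:ℤ)+1)).toNat, Finset.mem_range.2 (by omega), by omega⟩
    · rw [if_neg h]
  have hsum : (∑' t : ℤ, if (k : ℤ) < t then binProbOn (Finset.univ : Finset (Fin n)) p t else 0)
      = ∑ j ∈ Finset.range n, binW (Finset.univ : Finset (Fin n)) p (k+1+j) := by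
    rw [tsum_eq_sum hsupp, Finset.sum_image (by intro a _ b _ h; simp only at h; omega)]
    apply Finset.sum_congr rfl
    intro j _
    rw [if_pos (by omega : (k:ℤ) < (k:ℤ)+1+j),
      show (k:ℤ)+1+(j:ℤ) = ((k+1+j : ℕ) : ℤ) by push_cast; ring, binProbOn_eq_binW]
  rw [binProbOn_eq_binW, hsum]
  have hgeo : ∑ j ∈ Finset.range n, q^j ≤ 7/3 := by
    calc ∑ j ∈ Finset.range n, q^j ≤ ∑' j : ℕ, q^j :=
          Summable.sum_le_tsum _ (fun i _ => pow_nonneg hq0 i) (summable_geometric_of_lt_one hq0 hq1)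
      _ = (1-q)⁻¹ := tsum_geometric_of_lt_one hq0 hq1
      _ ≤ (3/7 : ℝ)⁻¹ := by
          apply inv_anti₀ (by norm_num)
          linarith
      _ = 7/3 := by norm_num
  have hT : 0 ≤ pmax * (k:ℝ)^((5:ℝ)/2)/d := by positivity
  have hq8 : q ≤ (8/7) * (d/(k:ℝ)) := by
    have h78 : (0:ℝ) < (7/8) * (k:ℝ) := by linarith
    have hle : (7/8) * (k:ℝ) ≤ ((k:ℝ) + 1) * (1 - pmax) := by nlinarith
    calc q ≤ d / ((7/8) * (k:ℝ)) := div_le_div_of_nonneg_left hd0.le h78 hle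
      _ = (8/7) * (d/(k:ℝ)) := by
          rw [div_mul_eq_div_div_swap]
          ring
  have hdk0 : (0:ℝ) ≤ d/(k:ℝ) := div_nonneg hd0.le (by positivity)
  calc ∑ j ∈ Finset.range n, binW (Finset.univ : Finset (Fin n)) p (k+1+j)
      ≤ ∑ j ∈ Finset.range n, q^(j+1) * binW Finset.univ p k :=
        Finset.sum_le_sum (fun j _ => hterm j)
    _ = (∑ j ∈ Finset.range n, q^j) * q * binW Finset.univ p k := by
        simp_rw [pow_succ]
        rw [← Finset.sum_mul, ← Finset.sum_mul]
    _ ≤ (7/3) * q * binW Finset.univ p k := by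
        apply mul_le_mul_of_nonneg_right _ hWk0
        exact mul_le_mul_of_nonneg_right hgeo hq0
    _ ≤ 4 * (d / k + pmax * (k:ℝ)^((5:ℝ)/2)/d) * binW Finset.univ p k := by
        apply mul_le_mul_of_nonneg_right _ hWk0
        nlinarith [hq8, hT, hdk0]
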